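/- In the Hopf algebra H of binary forests, the coproduct of the comb tree C_n with n ≥ 2 leaves is Δ(C_n) = Σ_{i=0}^{n-2} C(n-2,i)·C_1^i ⊗ C_{n-i} + 2·Σ_{j=0}^{n-2} C(n-2,j)·C_1^{j+1} ⊗ C_{n-j-1} + Σ_{k=2}^{n-1} Σ_{ℓ=0}^{n-k-1} C(n-k-1,ℓ)·C_k·C_1^ℓ ⊗ C_{n-k-ℓ} + C_n ⊗ 1, where C(m,i) denotes the binomial coefficient; in particular, the comb trees generate a Hopf subalgebra of H. -/

import Mathlib

/-- Full binary rooted trees. -/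
inductive BTree : Type
  | leaf : BTree
  | node : BTree → BTree → BTree
  deriving DecidableEq

namespace BTree

/-- Positions (root-to-leaf paths) of the leaves of a tree. -/
def leafPos : BTree → List (List Bool)
  | leaf => [[]]
  | node l r => (leafPos l).map (List.cons false) ++ (leafPos r).map (List.cons true)

/-- The maximal subtrees of the tree (sitting at position `q`) all of whose
leaves belong to the leaf subset with characteristic function `p`: the pruned
forest `F_A` of the cut corresponding to `A = {leaves ℓ | p ℓ}`. -/
def maxSub (p : List Bool → Bool) : BTree → List Bool → List BTree
  | leaf, q => if p q then [leaf] else []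
  | node l r, q =>
      if (leafPos (node l r)).all (fun s => p (q ++ s)) then [node l r]
      else maxSub p l (q ++ [false]) ++ maxSub p r (q ++ [true])

/-- The remainder `T/A` of the cut: delete all vertices all of whose
descendant leaves lie in `A` and suppress the resulting degree-2 vertices
(contracting back to a full binary tree); `none` if everything is deleted. -/
def quotA (p : List Bool → Bool) : BTree → List Bool → Option BTree
  | leaf, q => if p q then none else some leaf
  | node l r, q =>
      match quotA p l (q ++ [false]), quotA p r (q ++ [true]) with
      | some l', some r' => some (node l' r')
      | some l', none => some l'
      | none, some r' => some r'
      | none, none => none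

/-- The unlabelled comb tree with `n` leaves (`n ≥ 1`). -/
def comb : ℕ → BTree
  | 0 => leaf
  | 1 => leaf
  | n + 2 => node (comb (n + 1)) leaf

end BTree

noncomputable section
open scoped TensorProduct

/-- The Hopf algebra `H` of (unlabelled nonplanar) binary forests: the
polynomial algebra on binary trees, realized as the monoid algebra of the
free commutative monoid of forests (multisets of trees). -/
abbrev V : Type := AddMonoidAlgebra ℚ (Multiset BTree)

/-- Basis vector of a forest. -/
noncomputable def fδ (m : Multiset BTree) : V := AddMonoidAlgebra.single m 1

/-- The forest associated to an optional tree (empty forest for `none`). -/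
def optForest : Option BTree → Multiset BTree
  | none => 0
  | some t => {t}

/-- The coproduct of a tree, indexed by the subsets `A` of its set of leaves
(equivalently, by the binary-admissible cuts together with the total cut):
`Δ(T) = Σ_{A ⊆ L(T)} F_A ⊗ T/A`. -/
noncomputable def treeDelta (T : BTree) : V ⊗[ℚ] V :=
  ∑ A ∈ (BTree.leafPos T).toFinset.powerset,
    fδ ↑(BTree.maxSub (fun q => decide (q ∈ A)) T []) ⊗ₜ[ℚ]
      fδ (optForest (BTree.quotA (fun q => decide (q ∈ A)) T []))

/-- A forest all of whose trees are comb trees. -/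
def CombForest (m : Multiset BTree) : Prop :=
  ∀ t ∈ m, ∃ k : ℕ, t = BTree.comb (k + 1)

namespace BTree

/-- Position of the `i`-th right leaf of a comb. -/
def cpos (i : ℕ) : List Bool := List.replicate i false ++ [true]

/-- Position of the bottom leaf of `comb (n+1)`. -/
def cbot (n : ℕ) : List Bool := List.replicate n false

lemma comb_one : comb 1 = leaf := rfl

lemma comb_succ_eq {c : ℕ} (hc : 1 ≤ c) : comb (c + 1) = node (comb c) leaf := by
  obtain ⟨d, rfl⟩ : ∃ d, c = d + 1 := ⟨c - 1, by omega⟩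
  rfl

lemma cpos_succ (i : ℕ) : cpos (i + 1) = false :: cpos i := rfl

lemma cbot_succ (n : ℕ) : cbot (n + 1) = false :: cbot n := rfl

lemma cpos_ne_cbot (i n : ℕ) : cpos i ≠ cbot n := by
  intro h
  have : (true : Bool) ∈ cbot n := by
    rw [← h]; simp [cpos]
  simp [cbot, List.eq_of_mem_replicate] at this

lemma cpos_injective : Function.Injective cpos := by
  intro i j h
  have := congrArg List.length h
  simpa [cpos] using this

lemma leafPos_comb (n : ℕ) :
    leafPos (comb (n + 1)) = cbot n :: ((List.range n).reverse.map cpos) := by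
  induction n with
  | zero => rfl
  | succ n ih =>
    show leafPos (node (comb (n+1)) leaf) = _
    rw [leafPos, ih]
    simp only [List.map_cons, List.range_succ_eq_map, List.reverse_cons, List.map_append,
      List.map_map, List.map_reverse, leafPos]
    rfl

lemma mem_leafPos_comb {n : ℕ} {s : List Bool} :
    s ∈ leafPos (comb (n + 1)) ↔ s = cbot n ∨ ∃ i < n, s = cpos i := by
  rw [leafPos_comb]
  simp [eq_comm]

lemma maxSub_append (t : BTree) (p : List Bool → Bool) (q : List Bool) :
    maxSub p t q = maxSub (fun s => p (q ++ s)) t [] := by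
  induction t generalizing p q with
  | leaf => simp [maxSub]
  | node l r ihl ihr =>
    rw [maxSub, maxSub]
    simp only [List.nil_append]
    rw [ihl p (q ++ [false]), ihr p (q ++ [true]),
      ihl (fun s => p (q ++ s)) [false], ihr (fun s => p (q ++ s)) [true]]
    simp [List.append_assoc]

lemma quotA_append (t : BTree) (p : List Bool → Bool) (q : List Bool) :
    quotA p t q = quotA (fun s => p (q ++ s)) t [] := by
  induction t generalizing p q with
  | leaf => simp [quotA]
  | node l r ihl ihr =>
    rw [quotA, quotA]
    simp only [List.nil_append]
    rw [ihl p (q ++ [false]), ihr p (q ++ [true]),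
      ihl (fun s => p (q ++ s)) [false], ihr (fun s => p (q ++ s)) [true]]
    simp [List.append_assoc]

end BTree

namespace BTree

lemma maxSub_comb_rec (p : List Bool → Bool) (n : ℕ) :
    maxSub p (comb (n + 2)) [] =
      if (leafPos (comb (n + 2))).all p then [comb (n + 2)]
      else maxSub (fun s => p (false :: s)) (comb (n + 1)) [] ++
        (if p [true] then [leaf] else []) := by
  show maxSub p (node (comb (n+1)) leaf) [] = _
  rw [maxSub]
  simp only [List.nil_append]
  rw [maxSub_append _ p [false]]
  simp only [maxSub]
  rfl

lemma quotA_comb_rec (p : List Bool → Bool) (n : ℕ) :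
    quotA p (comb (n + 2)) [] =
      match quotA (fun s => p (false :: s)) (comb (n + 1)) [],
          (if p [true] then (none : Option BTree) else some leaf) with
      | some l', some r' => some (node l' r')
      | some l', none => some l'
      | none, some r' => some r'
      | none, none => none := by
  show quotA p (node (comb (n+1)) leaf) [] = _
  rw [quotA]
  simp only [List.nil_append]
  rw [quotA_append _ p [false]]
  simp [quotA]

/-- Number of leaves of `comb (n+1)` kept (outside the cut). -/
def kept (p : List Bool → Bool) (n : ℕ) : ℕ :=
  (if p (cbot n) then 0 else 1) + (List.range n).countP (fun i => !p (cpos i))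

lemma kept_succ (p : List Bool → Bool) (n : ℕ) :
    kept p (n + 1) = kept (fun s => p (false :: s)) n + (if p [true] then 0 else 1) := by
  have h0 : cpos 0 = [true] := rfl
  rw [kept, kept, List.range_succ_eq_map, List.countP_cons]
  rw [List.countP_map]
  have : ((fun i => !p (cpos i)) ∘ Nat.succ) = fun i => !p (false :: cpos i) := by
    funext i; rw [Function.comp_apply, cpos_succ]
  rw [this, cbot_succ, h0]
  rcases hb : p [true] <;> simp [hb] <;> omega

lemma quotA_comb (n : ℕ) (p : List Bool → Bool) :
    quotA p (comb (n + 1)) [] =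
      if kept p n = 0 then none else some (comb (kept p n)) := by
  induction n generalizing p with
  | zero =>
    show quotA p leaf [] = _
    rw [quotA]
    rcases h : p [] with _ | _ <;>
      simp [kept, cbot, List.range_zero, h, comb]
  | succ n ih =>
    rw [quotA_comb_rec, ih, kept_succ]
    set K := kept (fun s => p (false :: s)) n with hK
    rcases h2 : p [true] <;> by_cases h1 : K = 0
    · simp [h1, h2, comb_one]
    · have : comb (K + 1) = node (comb K) leaf := comb_succ_eq (by omega)
      simp [h1, h2, this]
    · simp [h1, h2]
    · simp [h1, h2]

lemma maxSub_comb_none (n : ℕ) (p : List Bool → Bool) (hb : p (cbot n) = false) :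
    maxSub p (comb (n + 1)) [] =
      List.replicate ((List.range n).countP (fun i => p (cpos i))) leaf := by
  induction n generalizing p with
  | zero =>
    show maxSub p leaf [] = _
    rw [maxSub]
    have : p [] = false := hb
    simp [this]
  | succ n ih =>
    have hall : (leafPos (comb (n+2))).all p = false := by
      rw [List.all_eq_false]
      exact ⟨cbot (n+1), mem_leafPos_comb.2 (Or.inl rfl), by simp [hb]⟩
    rw [maxSub_comb_rec, hall]
    simp only [Bool.false_eq_true, if_false]
    rw [ih _ hb]
    rw [List.range_succ_eq_map, List.countP_cons, List.countP_map]
    have hc : ((fun i => p (cpos i)) ∘ Nat.succ) = fun i => p (false :: cpos i) := by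
      funext i; rw [Function.comp_apply, cpos_succ]
    rw [hc]
    have h0 : cpos 0 = [true] := rfl
    rw [h0]
    rcases h2 : p [true] <;> simp [h2, List.replicate_succ']

lemma maxSub_comb_some (n : ℕ) (p : List Bool → Bool) (m : ℕ) (hm : m ≤ n)
    (hb : p (cbot n) = true)
    (hsuf : ∀ i, m ≤ i → i < n → p (cpos i) = true)
    (hbrk : 1 ≤ m → p (cpos (m - 1)) = false) :
    maxSub p (comb (n + 1)) [] =
      comb (n + 1 - m) :: List.replicate ((List.range m).countP (fun i => p (cpos i))) leaf := by
  induction n generalizing p m with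
  | zero =>
    have hm0 : m = 0 := by omega
    subst hm0
    show maxSub p leaf [] = _
    rw [maxSub]
    have : p [] = true := hb
    simp [this, comb_one]
  | succ n ih =>
    rcases Nat.eq_zero_or_pos m with rfl | hm1
    · have hall : (leafPos (comb (n+2))).all p = true := by
        rw [List.all_eq_true]; intro s hs
        rcases mem_leafPos_comb.1 hs with rfl | ⟨i, hi, rfl⟩
        · exact hb
        · exact hsuf i (Nat.zero_le _) hi
      rw [maxSub_comb_rec, hall]
      simp
    · have hall : (leafPos (comb (n+2))).all p = false := by
        rw [List.all_eq_false]
        exact ⟨cpos (m-1), mem_leafPos_comb.2 (Or.inr ⟨m-1, by omega, rfl⟩),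
          by simp [hbrk hm1]⟩
      rw [maxSub_comb_rec, hall]
      simp only [Bool.false_eq_true, if_false]
      have h0 : cpos 0 = [true] := rfl
      rcases Nat.eq_or_lt_of_le hm1 with h1 | h2
      · -- m = 1
        have hm' : m = 1 := h1.symm
        subst hm'
        rw [ih (fun s => p (false :: s)) 0 (Nat.zero_le _) hb
          (fun i _ hi => hsuf (i+1) (by omega) (by omega)) (by omega)]
        have hp0 : p [true] = false := hbrk (le_refl 1)
        simp [hp0, h0]
      · -- m ≥ 2
        obtain ⟨m', rfl⟩ : ∃ m', m = m' + 1 := ⟨m - 1, by omega⟩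
        have hm'1 : 1 ≤ m' := by omega
        rw [ih (fun s => p (false :: s)) m' (by omega) hb
          (fun i him hi => hsuf (i+1) (by omega) (by omega))
          (fun _ => by
            have h := hbrk (by omega)
            rw [show m' + 1 - 1 = m' from rfl] at h
            show p (false :: cpos (m' - 1)) = false
            rw [← cpos_succ, Nat.sub_add_cancel hm'1]
            exact h)]
        rw [List.range_succ_eq_map, List.countP_cons, List.countP_map]
        have hc : ((fun i => p (cpos i)) ∘ Nat.succ) = fun i => p (false :: cpos i) := by
          funext i; rw [Function.comp_apply, cpos_succ]
        rw [hc, h0]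
        have harith : n + 1 + 1 - (m' + 1) = n + 1 - m' := by omega
        rcases hp0 : p [true] <;>
          simp [hp0, List.replicate_succ', harith]

end BTree

section Helpers
open Finset

lemma countP_le_len (l : List ℕ) (p : ℕ → Bool) : l.countP p ≤ l.length :=
  List.countP_le_length

lemma countP_not_eq (l : List ℕ) (p : ℕ → Bool) :
    l.countP (fun a => !p a) = l.length - l.countP p := by
  induction l with
  | nil => simp
  | cons a l ih =>
    have hle := countP_le_len l p
    rcases h : p a <;> simp [List.countP_cons, h, ih] <;> omega

lemma toFinset_list_range (n : ℕ) : (List.range n).toFinset = Finset.range n := by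
  induction n with
  | zero => rfl
  | succ n ih =>
    rw [List.range_succ]
    ext x
    simp only [List.toFinset_append, ih, Finset.mem_union, List.mem_toFinset, List.mem_range,
      List.mem_singleton, Finset.mem_range]
    omega

lemma countP_range_mem (N : ℕ) (I : Finset ℕ) :
    (List.range N).countP (fun i => decide (i ∈ I)) = (I ∩ range N).card := by
  rw [List.countP_eq_length_filter,
    ← List.toFinset_card_of_nodup (List.nodup_range.filter _), List.toFinset_filter,
    toFinset_list_range]
  congr 1
  ext x
  simp only [Finset.mem_filter, Finset.mem_inter, decide_eq_true_eq]
  tauto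

lemma sum_powerset_card {M : Type*} [AddCommMonoid M] (s : Finset ℕ) (g : ℕ → M) :
    ∑ J ∈ s.powerset, g J.card = ∑ j ∈ range (s.card + 1), s.card.choose j • g j := by
  rw [Finset.sum_powerset]
  refine Finset.sum_congr rfl fun j _ => ?_
  rw [← Finset.card_powersetCard j s, ← Finset.sum_const]
  exact Finset.sum_congr rfl fun t ht => by rw [(Finset.mem_powersetCard.mp ht).2]

lemma sum_powerset_image {M α β : Type*} [AddCommMonoid M] [DecidableEq α] [DecidableEq β]
    (f : α → β) (hf : Function.Injective f) (s : Finset α) (F : Finset β → M) :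
    ∑ T ∈ (s.image f).powerset, F T = ∑ I ∈ s.powerset, F (I.image f) := by
  refine (Finset.sum_bij (fun I _ => I.image f) ?_ ?_ ?_ ?_).symm
  · intro I hI
    exact Finset.mem_powerset.mpr
      (Finset.image_subset_image (Finset.mem_powerset.mp hI))
  · intro a ha b hb h
    exact Finset.image_injective hf h
  · intro T hT
    refine ⟨s.filter (fun x => f x ∈ T), Finset.mem_powerset.mpr (Finset.filter_subset _ _), ?_⟩
    ext y
    simp only [Finset.mem_image, Finset.mem_filter]
    constructor
    · rintro ⟨x, ⟨_, hx⟩, rfl⟩; exact hx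
    · intro hy
      obtain ⟨x, hxs, rfl⟩ := Finset.mem_image.mp (Finset.mem_powerset.mp hT hy)
      exact ⟨x, ⟨hxs, hy⟩, rfl⟩
  · intro I hI; rfl

lemma sum_powerset_range_split {M : Type*} [AddCommMonoid M] (N : ℕ) (F : Finset ℕ → M) :
    ∑ I ∈ (range N).powerset, F I
      = F (range N)
        + ∑ k ∈ range N, ∑ J ∈ (range (N - 1 - k)).powerset, F (J ∪ Ico (N - k) N) := by
  induction N generalizing F with
  | zero => simp
  | succ N ih =>
    conv_lhs => rw [Finset.range_add_one]
    rw [Finset.sum_powerset_insert Finset.notMem_range_self,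
      ih (fun I => F (insert N I))]
    rw [Finset.sum_range_succ' (fun k => ∑ J ∈ (range (N + 1 - 1 - k)).powerset,
      F (J ∪ Ico (N + 1 - k) (N + 1)))]
    have h0 : ∑ J ∈ (range (N + 1 - 1 - 0)).powerset, F (J ∪ Ico (N + 1 - 0) (N + 1))
        = ∑ I ∈ (range N).powerset, F I := by
      refine Finset.sum_congr (by norm_num) fun J _ => ?_
      rw [show N + 1 - 0 = N + 1 from rfl, Finset.Ico_self, Finset.union_empty]
    have hmain : ∑ k ∈ range N, ∑ J ∈ (range (N - 1 - k)).powerset,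
          F (insert N (J ∪ Ico (N - k) N))
        = ∑ k ∈ range N, ∑ J ∈ (range (N + 1 - 1 - (k + 1))).powerset,
          F (J ∪ Ico (N + 1 - (k + 1)) (N + 1)) := by
      refine Finset.sum_congr rfl fun k hk => ?_
      have hk' : k < N := Finset.mem_range.mp hk
      refine Finset.sum_congr (by rw [show N + 1 - 1 - (k + 1) = N - 1 - k from by omega]) fun J _ => ?_
      congr 1
      rw [show N + 1 - (k + 1) = N - k by omega,
        Nat.Ico_succ_right_eq_insert_Ico (by omega), Finset.union_insert]
    rw [hmain, h0]
    have : insert N (range N) = range (N + 1) := (Finset.range_add_one).symm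
    rw [this]
    abel

end Helpers

namespace BTree
open Finset

lemma list_toFinset_map {α β : Type*} [DecidableEq α] [DecidableEq β] (l : List α) (f : α → β) :
    (l.map f).toFinset = l.toFinset.image f :=
  Multiset.toFinset_map f (l : Multiset α)

lemma toFinset_leafPos_comb (N : ℕ) :
    (leafPos (comb (N + 1))).toFinset = insert (cbot N) ((Finset.range N).image cpos) := by
  rw [leafPos_comb, List.toFinset_cons, list_toFinset_map, List.toFinset_reverse,
    toFinset_list_range]

lemma mem_image_cpos {I : Finset ℕ} {i : ℕ} : cpos i ∈ I.image cpos ↔ i ∈ I :=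
  ⟨fun h => by
    obtain ⟨j, hj, hji⟩ := Finset.mem_image.mp h
    rwa [← cpos_injective hji], fun h => Finset.mem_image_of_mem _ h⟩

lemma cbot_not_mem_image (N : ℕ) (I : Finset ℕ) : cbot N ∉ I.image cpos := by
  intro h
  obtain ⟨j, _, hji⟩ := Finset.mem_image.mp h
  exact cpos_ne_cbot j N hji

end BTree

open BTree Finset in
/-- The summand of `treeDelta` for the cut `A`. -/
noncomputable def cterm (n : ℕ) (A : Finset (List Bool)) : V ⊗[ℚ] V :=
  fδ ↑(maxSub (fun q => decide (q ∈ A)) (comb n) []) ⊗ₜ[ℚ]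
    fδ (optForest (quotA (fun q => decide (q ∈ A)) (comb n) []))

open BTree Finset

lemma treeDelta_comb_eq (n : ℕ) :
    treeDelta (comb n) = ∑ A ∈ (leafPos (comb n)).toFinset.powerset, cterm n A := rfl

lemma cterm_none (N : ℕ) (I : Finset ℕ) (hI : I ⊆ range N) :
    cterm (N + 1) (I.image cpos)
      = fδ (Multiset.replicate I.card BTree.leaf) ⊗ₜ[ℚ] fδ {comb (N + 1 - I.card)} := by
  set p : List Bool → Bool := fun q => decide (q ∈ I.image cpos) with hp
  have hb : p (cbot N) = false := by
    simp only [hp, decide_eq_false_iff_not]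
    exact cbot_not_mem_image N I
  have hcp : ∀ i, p (cpos i) = decide (i ∈ I) := by
    intro i
    simp only [hp, decide_eq_decide]
    exact mem_image_cpos
  have hcount : (List.range N).countP (fun i => p (cpos i)) = I.card := by
    have : (fun i => p (cpos i)) = fun i => decide (i ∈ I) := funext hcp
    rw [this, countP_range_mem, Finset.inter_eq_left.mpr hI]
  have hcard : I.card ≤ N := by
    have := Finset.card_le_card hI
    simpa using this
  have hmax := maxSub_comb_none N p hb
  have hkept : kept p N = N + 1 - I.card := by
    rw [kept, hb, countP_not_eq, hcount, List.length_range]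
    simp; omega
  have hquot := quotA_comb N p
  rw [hkept] at hquot
  rw [cterm, ← hp, hmax, hcount, hquot, if_neg (by omega)]
  rw [Multiset.coe_replicate]
  rfl

lemma cterm_total (N : ℕ) :
    cterm (N + 1) (insert (cbot N) ((range N).image cpos))
      = fδ {comb (N + 1)} ⊗ₜ[ℚ] fδ 0 := by
  set p : List Bool → Bool := fun q => decide (q ∈ insert (cbot N) ((range N).image cpos)) with hp
  have hb : p (cbot N) = true := by simp [hp]
  have hcp : ∀ i, i < N → p (cpos i) = true := by
    intro i hi
    simp only [hp, decide_eq_true_eq, Finset.mem_insert]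
    exact Or.inr (mem_image_cpos.mpr (Finset.mem_range.mpr hi))
  have hmax := maxSub_comb_some N p 0 (Nat.zero_le _) hb
    (fun i _ hi => hcp i hi) (by omega)
  have hkept : kept p N = 0 := by
    rw [kept, hb]
    simp only [if_true, Nat.zero_add]
    rw [List.countP_eq_zero]  -- ?
    intro i hi
    rw [hcp i (List.mem_range.mp hi)]
    simp
  have hquot := quotA_comb N p
  rw [hkept, if_pos rfl] at hquot
  rw [cterm, ← hp, hmax, hquot]
  simp [optForest]

lemma cterm_some (N k : ℕ) (J : Finset ℕ) (hk : k < N) (hJ : J ⊆ range (N - 1 - k)) :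
    cterm (N + 1) (insert (cbot N) ((J ∪ Ico (N - k) N).image cpos))
      = fδ (comb (k + 1) ::ₘ Multiset.replicate J.card BTree.leaf) ⊗ₜ[ℚ]
          fδ {comb (N - k - J.card)} := by
  set I : Finset ℕ := J ∪ Ico (N - k) N with hI
  set p : List Bool → Bool := fun q => decide (q ∈ insert (cbot N) (I.image cpos)) with hp
  have hJr : ∀ x ∈ J, x < N - 1 - k := fun x hx => Finset.mem_range.mp (hJ hx)
  have hb : p (cbot N) = true := by simp [hp]
  have hcp : ∀ i, p (cpos i) = decide (i ∈ I) := by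
    intro i
    simp only [hp, decide_eq_decide, Finset.mem_insert]
    constructor
    · rintro (h | h)
      · exact absurd h (cpos_ne_cbot i N)
      · exact mem_image_cpos.mp h
    · intro h; exact Or.inr (mem_image_cpos.mpr h)
  have hsuf : ∀ i, N - k ≤ i → i < N → p (cpos i) = true := by
    intro i h1 h2
    rw [hcp]
    simp only [decide_eq_true_eq, hI, Finset.mem_union, Finset.mem_Ico]
    exact Or.inr ⟨h1, h2⟩
  have hbrk : 1 ≤ N - k → p (cpos (N - k - 1)) = false := by
    intro _
    rw [hcp]
    simp only [decide_eq_false_iff_not, hI, Finset.mem_union, Finset.mem_Ico]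
    rintro (h | h)
    · have := hJr _ h; omega
    · omega
  have hmax := maxSub_comb_some N p (N - k) (by omega) hb hsuf hbrk
  have hcount : (List.range (N - k)).countP (fun i => p (cpos i)) = J.card := by
    have : (fun i => p (cpos i)) = fun i => decide (i ∈ I) := funext hcp
    rw [this, countP_range_mem]
    congr 1
    ext x
    simp only [Finset.mem_inter, hI, Finset.mem_union, Finset.mem_Ico, Finset.mem_range]
    constructor
    · rintro ⟨h1 | h1, h2⟩
      · exact h1
      · omega
    · intro h
      have := hJr _ h
      exact ⟨Or.inl h, by omega⟩
  have hcountN : (List.range N).countP (fun i => p (cpos i)) = J.card + k := by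
    have : (fun i => p (cpos i)) = fun i => decide (i ∈ I) := funext hcp
    rw [this, countP_range_mem]
    have hIr : I ∩ range N = I := by
      rw [Finset.inter_eq_left]
      intro x hx
      rcases Finset.mem_union.mp hx with h | h
      · have := hJr _ h; exact Finset.mem_range.mpr (by omega)
      · have := Finset.mem_Ico.mp h; exact Finset.mem_range.mpr (by omega)
    rw [hIr, hI, Finset.card_union_of_disjoint, Nat.card_Ico]
    · omega
    · rw [Finset.disjoint_left]
      intro x hx hx2
      have := hJr _ hx
      have := Finset.mem_Ico.mp hx2
      omega
  have hJcard : J.card ≤ N - 1 - k := by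
    have := Finset.card_le_card hJ
    simpa using this
  have hkept : kept p N = N - k - J.card := by
    rw [kept, hb, countP_not_eq, hcountN, List.length_range]
    simp; omega
  have hquot := quotA_comb N p
  rw [hkept] at hquot
  rw [cterm, ← hp, hmax, hcount, hquot, if_neg (by omega)]
  rw [show N + 1 - (N - k) = k + 1 by omega]
  have hcoe : (↑(comb (k + 1) :: List.replicate J.card BTree.leaf) : Multiset BTree)
      = comb (k + 1) ::ₘ Multiset.replicate J.card BTree.leaf := by
    rw [← Multiset.cons_coe, Multiset.coe_replicate]
  rw [hcoe]
  rfl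


lemma treeDelta_comb_formula (N : ℕ) :
    treeDelta (comb (N + 1)) =
      (∑ i ∈ range (N + 1), N.choose i •
          (fδ (Multiset.replicate i BTree.leaf) ⊗ₜ[ℚ] fδ {comb (N + 1 - i)}))
        + (fδ {comb (N + 1)} ⊗ₜ[ℚ] fδ 0
          + ∑ k ∈ range N, ∑ l ∈ range (N - 1 - k + 1), (N - 1 - k).choose l •
              (fδ (comb (k + 1) ::ₘ Multiset.replicate l BTree.leaf) ⊗ₜ[ℚ]
                fδ {comb (N - k - l)})) := by
  rw [treeDelta_comb_eq, toFinset_leafPos_comb,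
    Finset.sum_powerset_insert (cbot_not_mem_image N _)]
  congr 1
  · -- cuts not containing the bottom leaf
    rw [sum_powerset_image cpos cpos_injective (range N) (cterm (N + 1))]
    rw [Finset.sum_congr rfl (fun I hI => cterm_none N I (Finset.mem_powerset.mp hI))]
    rw [sum_powerset_card (range N)
      (fun i => fδ (Multiset.replicate i BTree.leaf) ⊗ₜ[ℚ] fδ {comb (N + 1 - i)})]
    rw [Finset.card_range]
  · -- cuts containing the bottom leaf
    rw [sum_powerset_image cpos cpos_injective (range N)
      (fun T => cterm (N + 1) (insert (cbot N) T))]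
    rw [sum_powerset_range_split N
      (fun I => cterm (N + 1) (insert (cbot N) (I.image cpos)))]
    rw [cterm_total N]
    congr 1
    refine Finset.sum_congr rfl fun k hk => ?_
    have hk' : k < N := Finset.mem_range.mp hk
    rw [Finset.sum_congr rfl (fun J hJ => cterm_some N k J hk' (Finset.mem_powerset.mp hJ))]
    rw [sum_powerset_card (range (N - 1 - k))
      (fun l => fδ (comb (k + 1) ::ₘ Multiset.replicate l BTree.leaf) ⊗ₜ[ℚ]
        fδ {comb (N - k - l)})]
    rw [Finset.card_range]

open BTree in
/-- The coproduct of the comb tree `C_n` (`n ≥ 2`) in the Hopf algebra of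
binary forests:
`Δ(C_n) = Σ_{i=0}^{n-2} C(n-2,i)·C_1^i ⊗ C_{n-i}
 + 2·Σ_{j=0}^{n-2} C(n-2,j)·C_1^{j+1} ⊗ C_{n-j-1}
 + Σ_{k=2}^{n-1} Σ_{ℓ=0}^{n-k-1} C(n-k-1,ℓ)·C_k·C_1^ℓ ⊗ C_{n-k-ℓ} + C_n ⊗ 1`;
in particular the comb trees generate a Hopf subalgebra (the coproduct of a
comb lies in the span of tensors of comb forests). -/
theorem comb_coproduct (n : ℕ) (hn : 2 ≤ n) :
    treeDelta (comb n) =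
      (∑ i ∈ Finset.range (n - 1), ((n - 2).choose i) •
        (fδ (Multiset.replicate i BTree.leaf) ⊗ₜ[ℚ] fδ {comb (n - i)}))
      + 2 • (∑ j ∈ Finset.range (n - 1), ((n - 2).choose j) •
        (fδ (Multiset.replicate (j + 1) BTree.leaf) ⊗ₜ[ℚ] fδ {comb (n - j - 1)}))
      + (∑ k ∈ Finset.Icc 2 (n - 1), ∑ l ∈ Finset.range (n - k), ((n - k - 1).choose l) •
        (fδ (comb k ::ₘ Multiset.replicate l BTree.leaf) ⊗ₜ[ℚ] fδ {comb (n - k - l)}))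
      + fδ {comb n} ⊗ₜ[ℚ] fδ 0 ∧
    treeDelta (comb n) ∈ Submodule.span ℚ
      {x : V ⊗[ℚ] V | ∃ f g : Multiset BTree, CombForest f ∧ CombForest g ∧
        x = fδ f ⊗ₜ[ℚ] fδ g} := by
  obtain ⟨m, rfl⟩ : ∃ m, n = m + 2 := ⟨n - 2, by omega⟩
  set X : ℕ → V ⊗[ℚ] V :=
    fun i => fδ (Multiset.replicate i BTree.leaf) ⊗ₜ[ℚ] fδ {comb (m + 2 - i)} with hX
  set Y : ℕ → ℕ → V ⊗[ℚ] V :=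
    fun k l => fδ (comb (k + 1) ::ₘ Multiset.replicate l BTree.leaf) ⊗ₜ[ℚ]
      fδ {comb (m + 1 - k - l)} with hY
  have hT2 : (∑ j ∈ Finset.range (m + 2 - 1), ((m + 2 - 2).choose j) •
        (fδ (Multiset.replicate (j + 1) BTree.leaf) ⊗ₜ[ℚ] fδ {comb (m + 2 - j - 1)}))
      = ∑ j ∈ Finset.range (m + 1), m.choose j • X (j + 1) := by
    refine Finset.sum_congr (by rw [show m + 2 - 1 = m + 1 from rfl]) fun j hj => ?_
    simp only [hX]
    rw [show m + 2 - (j + 1) = m + 2 - j - 1 from by omega]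
    rfl
  have hA : (∑ i ∈ range (m + 2), (m + 1).choose i • X i)
      = (∑ i ∈ Finset.range (m + 2 - 1), ((m + 2 - 2).choose i) •
          (fδ (Multiset.replicate i BTree.leaf) ⊗ₜ[ℚ] fδ {comb (m + 2 - i)}))
        + ∑ j ∈ Finset.range (m + 1), m.choose j • X (j + 1) := by
    have e1 : (∑ i ∈ Finset.range (m + 2 - 1), ((m + 2 - 2).choose i) •
          (fδ (Multiset.replicate i BTree.leaf) ⊗ₜ[ℚ] fδ {comb (m + 2 - i)}))
        = ∑ i ∈ Finset.range (m + 1), m.choose i • X i := by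
      refine Finset.sum_congr (by rw [show m + 2 - 1 = m + 1 from rfl]) fun i hi => rfl
    have e2 : ∀ i, (m + 1).choose (i + 1) • X (i + 1)
        = m.choose i • X (i + 1) + m.choose (i + 1) • X (i + 1) := by
      intro i
      rw [Nat.choose_succ_succ, add_smul]
    have e6 : (∑ i ∈ range (m + 1), m.choose (i + 1) • X (i + 1)) + (m + 1).choose 0 • X 0
        = ∑ i ∈ range (m + 1), m.choose i • X i := by
      calc (∑ i ∈ range (m + 1), m.choose (i + 1) • X (i + 1)) + (m + 1).choose 0 • X 0
          = (∑ i ∈ range (m + 1), m.choose (i + 1) • X (i + 1)) + m.choose 0 • X 0 := by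
            rw [Nat.choose_zero_right, Nat.choose_zero_right]
        _ = ∑ i ∈ range (m + 1 + 1), m.choose i • X i :=
            (Finset.sum_range_succ' (fun i => m.choose i • X i) (m + 1)).symm
        _ = (∑ i ∈ range (m + 1), m.choose i • X i) + m.choose (m + 1) • X (m + 1) :=
            Finset.sum_range_succ _ _
        _ = ∑ i ∈ range (m + 1), m.choose i • X i := by
            rw [Nat.choose_succ_self, zero_smul, add_zero]
    rw [e1, show m + 2 = m + 1 + 1 from rfl,
      Finset.sum_range_succ' (fun i => (m + 1).choose i • X i) (m + 1),
      Finset.sum_congr rfl fun i _ => e2 i, Finset.sum_add_distrib, add_assoc, e6]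
    abel
  have hY0 : (∑ l ∈ range (m + 1 - 1 - 0 + 1), (m + 1 - 1 - 0).choose l • Y 0 l)
      = ∑ j ∈ Finset.range (m + 1), m.choose j • X (j + 1) := by
    refine Finset.sum_congr (by rw [show m + 1 - 1 - 0 + 1 = m + 1 from rfl]) fun l hl => ?_
    simp only [hY, hX]
    rw [show comb (0 + 1) ::ₘ Multiset.replicate l BTree.leaf
        = Multiset.replicate (l + 1) BTree.leaf from by rw [Multiset.replicate_succ, comb_one],
      show m + 1 - 0 - l = m + 2 - (l + 1) from by omega]
    rfl
  have hB : (∑ k ∈ range (m + 1), ∑ l ∈ range (m + 1 - 1 - k + 1), (m + 1 - 1 - k).choose l • Y k l)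
      = (∑ j ∈ Finset.range (m + 1), m.choose j • X (j + 1))
        + ∑ k ∈ Finset.Icc 2 (m + 2 - 1), ∑ l ∈ Finset.range (m + 2 - k),
            ((m + 2 - k - 1).choose l) •
            (fδ (comb k ::ₘ Multiset.replicate l BTree.leaf) ⊗ₜ[ℚ] fδ {comb (m + 2 - k - l)}) := by
    have eT3 : (∑ k ∈ Finset.Icc 2 (m + 2 - 1), ∑ l ∈ Finset.range (m + 2 - k),
            ((m + 2 - k - 1).choose l) •
            (fδ (comb k ::ₘ Multiset.replicate l BTree.leaf) ⊗ₜ[ℚ] fδ {comb (m + 2 - k - l)}))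
        = ∑ k ∈ range m, ∑ l ∈ range (m + 1 - 1 - (k + 1) + 1),
            (m + 1 - 1 - (k + 1)).choose l • Y (k + 1) l := by
      rw [show m + 2 - 1 = m + 1 from rfl, ← Finset.Ico_add_one_right_eq_Icc,
        Finset.sum_Ico_eq_sum_range]
      refine Finset.sum_congr (by rw [show m + 1 + 1 - 2 = m from rfl]) fun k hk => ?_
      have hk' : k < m := Finset.mem_range.mp hk
      refine Finset.sum_congr
        (by rw [show m + 1 - 1 - (k + 1) + 1 = m + 2 - (2 + k) from by omega]) fun l hl => ?_
      have hl' : l < m + 1 - 1 - (k + 1) + 1 := Finset.mem_range.mp hl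
      simp only [hY]
      rw [show m + 2 - (2 + k) - 1 = m + 1 - 1 - (k + 1) from by omega,
        show m + 2 - (2 + k) - l = m + 1 - (k + 1) - l from by omega,
        show 2 + k = k + 1 + 1 from by omega]
    rw [eT3, Finset.sum_range_succ'
      (fun k => ∑ l ∈ range (m + 1 - 1 - k + 1), (m + 1 - 1 - k).choose l • Y k l) m,
      hY0]
    abel
  have key : treeDelta (comb (m + 2)) =
      (∑ i ∈ Finset.range (m + 2 - 1), ((m + 2 - 2).choose i) •
        (fδ (Multiset.replicate i BTree.leaf) ⊗ₜ[ℚ] fδ {comb (m + 2 - i)}))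
      + 2 • (∑ j ∈ Finset.range (m + 2 - 1), ((m + 2 - 2).choose j) •
        (fδ (Multiset.replicate (j + 1) BTree.leaf) ⊗ₜ[ℚ] fδ {comb (m + 2 - j - 1)}))
      + (∑ k ∈ Finset.Icc 2 (m + 2 - 1), ∑ l ∈ Finset.range (m + 2 - k), ((m + 2 - k - 1).choose l) •
        (fδ (comb k ::ₘ Multiset.replicate l BTree.leaf) ⊗ₜ[ℚ] fδ {comb (m + 2 - k - l)}))
      + fδ {comb (m + 2)} ⊗ₜ[ℚ] fδ 0 := by
    have hform := treeDelta_comb_formula (m + 1)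
    rw [show m + 1 + 1 = m + 2 from rfl] at hform
    rw [hform, hA, hB, hT2, two_smul]
    abel
  refine ⟨key, ?_⟩
  rw [key]
  set Sp := Submodule.span ℚ
      {x : V ⊗[ℚ] V | ∃ f g : Multiset BTree, CombForest f ∧ CombForest g ∧
        x = fδ f ⊗ₜ[ℚ] fδ g} with hSp
  have comb_forest_single : ∀ c : ℕ, 1 ≤ c → CombForest ({comb c} : Multiset BTree) := by
    intro c hc t ht
    rw [Multiset.mem_singleton.mp ht]
    exact ⟨c - 1, by congr 1; omega⟩
  have repl_forest : ∀ i : ℕ, CombForest (Multiset.replicate i BTree.leaf) := by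
    intro i t ht
    rw [Multiset.eq_of_mem_replicate ht]
    exact ⟨0, rfl⟩
  have mem1 : ∀ (i c : ℕ), 1 ≤ c →
      (fδ (Multiset.replicate i BTree.leaf) ⊗ₜ[ℚ] fδ {comb c}) ∈ Sp := by
    intro i c hc
    exact Submodule.subset_span ⟨_, _, repl_forest i, comb_forest_single c hc, rfl⟩
  have nsmul_mem : ∀ (a : ℕ) (x : V ⊗[ℚ] V), x ∈ Sp → a • x ∈ Sp := by
    intro a x hx
    rw [← Nat.cast_smul_eq_nsmul ℚ]
    exact Submodule.smul_mem _ _ hx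
  refine Submodule.add_mem _ (Submodule.add_mem _ (Submodule.add_mem _ ?_ ?_) ?_) ?_
  · refine Submodule.sum_mem _ fun i hi => ?_
    have hi' : i < m + 2 - 1 := Finset.mem_range.mp hi
    exact nsmul_mem _ _ (mem1 i (m + 2 - i) (by omega))
  · refine nsmul_mem _ _ (Submodule.sum_mem _ fun j hj => ?_)
    have hj' : j < m + 2 - 1 := Finset.mem_range.mp hj
    exact nsmul_mem _ _ (mem1 (j + 1) (m + 2 - j - 1) (by omega))
  · refine Submodule.sum_mem _ fun k hk => ?_
    have hk' : 2 ≤ k ∧ k ≤ m + 2 - 1 := Finset.mem_Icc.mp hk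
    refine Submodule.sum_mem _ fun l hl => ?_
    have hl' : l < m + 2 - k := Finset.mem_range.mp hl
    refine nsmul_mem _ _ (Submodule.subset_span ⟨_, _, ?_, comb_forest_single (m + 2 - k - l) (by omega), rfl⟩)
    intro t ht
    rcases Multiset.mem_cons.mp ht with rfl | ht'
    · exact ⟨k - 1, by congr 1; omega⟩
    · rw [Multiset.eq_of_mem_replicate ht']
      exact ⟨0, rfl⟩
  · refine Submodule.subset_span ⟨{comb (m + 2)}, 0, comb_forest_single (m + 2) (by omega), ?_, rfl⟩
    intro t ht
    exact absurd ht (Multiset.notMem_zero t)
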